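/- Closed form for the first-layer fixing subproblem under the ℓ₁ norm: the maximum of c·Σ_{j=1}^n W_j x_j over all x ∈ X⁰ = {x ∈ (1/q)ℤ₊^n ∩ [0,1]^n : ‖x − x̄‖₁ ≤ ε} equals min( Σ_{j=1}^n max(c·W_j, 0), (1/q)⌊qε⌋ + c·Σ_{j=1}^n W_j x̄_j ), and this maximum is attained. -/

import Mathlib

open Finset

lemma min_split (B c0 C : ℝ) (hC : 0 ≤ C) :
    min B c0 + min (B - min B c0) C = min B (c0 + C) := by
  rcases le_total B c0 with h | h
  · rw [min_eq_left h, sub_self, min_eq_left hC, min_eq_left (by linarith), add_zero]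
  · rw [min_eq_right h]
    rcases le_total (B - c0) C with h' | h'
    · rw [min_eq_left h', min_eq_left (by linarith)]; linarith
    · rw [min_eq_right h', min_eq_right (by linarith)]

lemma key {ι : Type*} [DecidableEq ι] (q : ℕ) (hq : 1 ≤ q) (s : Finset ι)
    (a xbar : ι → ℝ) :
    ∀ (b : ℕ),
    (∀ j ∈ s, a j = -1 ∨ a j = 0 ∨ a j = 1) →
    (∀ j ∈ s, ∃ m : ℕ, xbar j = (m : ℝ) / q) →
    (∀ j ∈ s, 0 ≤ xbar j ∧ xbar j ≤ 1) →
    ∃ x : ι → ℝ, (∀ j ∈ s, ∃ m : ℕ, x j = (m : ℝ) / q) ∧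
      (∀ j ∈ s, 0 ≤ x j ∧ x j ≤ 1) ∧
      (∑ j ∈ s, |x j - xbar j|) ≤ (b : ℝ) / q ∧
      ∑ j ∈ s, a j * x j
        = ∑ j ∈ s, a j * xbar j
          + min ((b : ℝ) / q) (∑ j ∈ s, (max (a j) 0 - a j * xbar j)) := by
  classical
  have hq0 : (0 : ℝ) < q := by exact_mod_cast hq
  induction s using Finset.induction_on with
  | empty =>
      intro b _ _ _
      refine ⟨xbar, by simp, by simp, by simp; positivity, ?_⟩
      simp [min_eq_right (by positivity : (0:ℝ) ≤ (b:ℝ)/q)]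
  | @insert j s hj ih =>
      intro b ha hx1 hx2
      obtain ⟨mb, hmb⟩ := hx1 j (mem_insert_self j s)
      have hmbq : mb ≤ q := by
        have := (hx2 j (mem_insert_self j s)).2
        rw [hmb, div_le_one hq0] at this
        exact_mod_cast this
      have haj := ha j (mem_insert_self j s)
      set cnat : ℕ := if a j = 1 then q - mb else if a j = -1 then mb else 0 with hcnat
      have hcap : max (a j) 0 - a j * xbar j = (cnat : ℝ) / q := by
        rcases haj with h | h | h
        · rw [hcnat, if_neg (by rw [h]; norm_num), if_pos h, h, hmb]
          rw [max_eq_right (by norm_num)]; ring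
        · rw [hcnat, if_neg (by rw [h]; norm_num), if_neg (by rw [h]; norm_num), h]
          simp
        · rw [hcnat, if_pos h, h, hmb, Nat.cast_sub hmbq]
          rw [max_eq_left (by norm_num)]; field_simp
      have hcm1 : a j = -1 → cnat = mb := fun h => by
        rw [hcnat, if_neg (by rw [h]; norm_num), if_pos h]
      have hc1 : a j = 1 → cnat = q - mb := fun h => by
        rw [hcnat, if_pos h]
      set d : ℕ := min b cnat with hd
      obtain ⟨x', hx'1, hx'2, hx'sum, hx'val⟩ :=
        ih (b - d) (fun i hi => ha i (mem_insert_of_mem hi))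
          (fun i hi => hx1 i (mem_insert_of_mem hi))
          (fun i hi => hx2 i (mem_insert_of_mem hi))
      set x : ι → ℝ := Function.update x' j (xbar j + a j * ((d : ℝ) / q)) with hx
      have hxj : x j = xbar j + a j * ((d : ℝ) / q) := by simp [hx]
      have hxs : ∀ i ∈ s, x i = x' i := by
        intro i hi
        have : i ≠ j := fun h => hj (h ▸ hi)
        simp [hx, Function.update_of_ne this]
      have hd0 : a j = 0 → d = 0 := by
        intro h; simp [hd, hcnat, h]
      have habs : |x j - xbar j| = (d : ℝ) / q := by
        rw [hxj]
        rcases haj with h | h | h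
        · rw [h]; rw [show xbar j + -1 * ((d:ℝ)/q) - xbar j = -((d:ℝ)/q) by ring,
            abs_neg, abs_of_nonneg (by positivity)]
        · simp [h, hd0 h]
        · rw [h]; rw [show xbar j + 1 * ((d:ℝ)/q) - xbar j = (d:ℝ)/q by ring,
            abs_of_nonneg (by positivity)]
      have hdcnat : d ≤ cnat := min_le_right _ _
      have hdb : d ≤ b := min_le_left _ _
      refine ⟨x, ?_, ?_, ?_, ?_⟩
      · intro i hi
        rcases mem_insert.mp hi with rfl | hi
        · rcases haj with h | h | h
          · refine ⟨mb - d, ?_⟩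
            have hdm : d ≤ mb := (hcm1 h) ▸ hdcnat
            rw [hxj, h, hmb, Nat.cast_sub hdm]; ring
          · exact ⟨mb, by rw [hxj, h, hmb]; ring⟩
          · refine ⟨mb + d, ?_⟩
            rw [hxj, h, hmb]; push_cast; ring
        · obtain ⟨m, hm⟩ := hx'1 i hi; exact ⟨m, by rw [hxs i hi]; exact hm⟩
      · intro i hi
        rcases mem_insert.mp hi with rfl | hi
        · rcases haj with h | h | h
          · have hdm : d ≤ mb := (hcm1 h) ▸ hdcnat
            constructor
            · rw [hxj, h, hmb]
              have : (d : ℝ) ≤ (mb : ℝ) := by exact_mod_cast hdm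
              rw [show (mb:ℝ)/q + -1 * ((d:ℝ)/q) = ((mb:ℝ) - d)/q by ring]
              exact div_nonneg (by linarith) hq0.le
            · rw [hxj, h]
              have : (0:ℝ) ≤ (d:ℝ)/q := by positivity
              nlinarith [(hx2 i (mem_insert_self i s)).2]
          · rw [hxj, h]; simpa using hx2 i (mem_insert_self i s)
          · have hdm : d ≤ q - mb := (hc1 h) ▸ hdcnat
            constructor
            · rw [hxj, h]
              have : (0:ℝ) ≤ (d:ℝ)/q := by positivity
              nlinarith [(hx2 i (mem_insert_self i s)).1]
            · rw [hxj, h, hmb]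
              have hle : (d : ℝ) + mb ≤ q := by
                have : d + mb ≤ q := by omega
                exact_mod_cast this
              rw [show (mb:ℝ)/q + 1 * ((d:ℝ)/q) = ((d:ℝ) + mb)/q by ring, div_le_one hq0]
              linarith
        · rw [hxs i hi]; exact hx'2 i hi
      · rw [sum_insert hj, habs, sum_congr rfl (fun i hi => by rw [hxs i hi])]
        have hc : ((b - d : ℕ) : ℝ) = (b : ℝ) - d := by
          rw [Nat.cast_sub hdb]
        rw [hc] at hx'sum
        have : ((d:ℝ)/q) + ((b:ℝ) - d)/q = (b:ℝ)/q := by field_simp; ring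
        linarith [hx'sum]
      · rw [sum_insert hj, sum_insert hj, sum_insert hj,
          sum_congr rfl (fun i hi => by rw [hxs i hi] : ∀ i ∈ s, a i * x i = a i * x' i),
          hx'val]
        have hc : ((b - d : ℕ) : ℝ) = (b : ℝ) - d := Nat.cast_sub hdb
        have hdval : (d : ℝ)/q = min ((b:ℝ)/q) ((cnat:ℝ)/q) := by
          rw [hd, Nat.cast_min]
          exact (min_div_div_right hq0.le _ _).symm
        have hCnn : (0:ℝ) ≤ ∑ i ∈ s, (max (a i) 0 - a i * xbar i) := by
          apply sum_nonneg
          intro i hi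
          rcases ha i (mem_insert_of_mem hi) with h | h | h <;> rw [h] <;>
            [skip; skip; skip] <;>
            simp <;> [linarith [(hx2 i (mem_insert_of_mem hi)).1];
              linarith [(hx2 i (mem_insert_of_mem hi)).2]]
        have hajx : a j * x j = a j * xbar j + (d:ℝ)/q := by
          rw [hxj]
          rcases haj with h | h | h
          · rw [h]; ring
          · rw [h, hd0 h]; simp
          · rw [h]; ring
        rw [hajx, hc, hcap]
        have hsub : ((b:ℝ) - d)/q = (b:ℝ)/q - ((d:ℝ)/q) := by ring
        rw [hsub, hdval]
        have hms := min_split ((b:ℝ)/q) ((cnat:ℝ)/q)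
          (∑ i ∈ s, (max (a i) 0 - a i * xbar i)) hCnn
        linarith

lemma min_rearr (A B M : ℝ) : A + min B (M - A) = min M (B + A) := by
  rcases le_total B (M - A) with h | h
  · rw [min_eq_left h, min_eq_right (by linarith)]; ring
  · rw [min_eq_right h, min_eq_left (by linarith)]; ring


/-- Closed form for the first-layer fixing subproblem under the ℓ₁ norm: the maximum of
`c·∑ W j x j` over `X⁰ = {x ∈ (1/q)ℤ₊^n ∩ [0,1]^n : ‖x - x̄‖₁ ≤ ε}` is attained and equals
`min(∑ j max(c·W j, 0), (1/q)⌊qε⌋ + c·∑ W j x̄ j)`. -/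
theorem stmt_11 (n : ℕ) (q : ℕ) (hq : 1 ≤ q)
    (xbar : Fin n → ℝ)
    (hxbar1 : ∀ j, ∃ m : ℕ, xbar j = (m : ℝ) / (q : ℝ))
    (hxbar2 : ∀ j, 0 ≤ xbar j ∧ xbar j ≤ 1)
    (ε : ℝ) (hε : 0 ≤ ε)
    (W : Fin n → ℝ) (hW : ∀ j, W j = -1 ∨ W j = 0 ∨ W j = 1)
    (c : ℝ) (hc : c = -1 ∨ c = 1) :
    IsGreatest
      {v : ℝ | ∃ x : Fin n → ℝ,
        ((∀ j, ∃ m : ℕ, x j = (m : ℝ) / (q : ℝ)) ∧ (∀ j, 0 ≤ x j ∧ x j ≤ 1) ∧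
          (∑ j, |x j - xbar j|) ≤ ε) ∧
        v = c * ∑ j, W j * x j}
      (min (∑ j, max (c * W j) 0)
        ((1 / (q : ℝ)) * (⌊(q : ℝ) * ε⌋ : ℝ) + c * ∑ j, W j * xbar j)) := by
  have hq0 : (0 : ℝ) < q := by exact_mod_cast hq
  have ha : ∀ j, c * W j = -1 ∨ c * W j = 0 ∨ c * W j = 1 := by
    intro j
    rcases hc with rfl | rfl <;> rcases hW j with h | h | h <;> rw [h] <;> norm_num
  have hb0 : (0 : ℤ) ≤ ⌊(q : ℝ) * ε⌋ := Int.floor_nonneg.mpr (by positivity)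
  set b : ℕ := (⌊(q : ℝ) * ε⌋).toNat with hbdef
  have hbcast : ((b : ℕ) : ℝ) = ((⌊(q : ℝ) * ε⌋ : ℤ) : ℝ) := by
    rw [hbdef]; exact_mod_cast Int.toNat_of_nonneg hb0
  have hcw : ∀ x : Fin n → ℝ, c * ∑ j, W j * x j = ∑ j, (c * W j) * x j := by
    intro x; rw [Finset.mul_sum]
    exact Finset.sum_congr rfl (fun j _ => by ring)
  have hfloorle : ((⌊(q : ℝ) * ε⌋ : ℤ) : ℝ) / q ≤ ε := by
    rw [div_le_iff₀ hq0]
    calc ((⌊(q : ℝ) * ε⌋ : ℤ) : ℝ) ≤ (q : ℝ) * ε := Int.floor_le _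
      _ = ε * q := by ring
  constructor
  · -- membership
    obtain ⟨x, h1, h2, h3, h4⟩ := key q hq Finset.univ (fun j => c * W j) xbar b
      (fun j _ => ha j) (fun j _ => hxbar1 j) (fun j _ => hxbar2 j)
    refine ⟨x, ⟨fun j => h1 j (Finset.mem_univ j), fun j => h2 j (Finset.mem_univ j), ?_⟩, ?_⟩
    · calc ∑ j, |x j - xbar j| ≤ (b : ℝ) / q := h3
        _ ≤ ε := by rw [hbcast]; exact hfloorle
    · rw [hcw x, h4, hcw xbar, hbcast]
      rw [Finset.sum_sub_distrib, min_rearr]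
      congr 1
      ring
  · -- upper bound
    rintro v ⟨x, ⟨hx1', hx2', hxd⟩, rfl⟩
    rw [hcw x]
    apply le_min
    · apply Finset.sum_le_sum
      intro j _
      rcases ha j with h | h | h <;> rw [h]
      · rw [max_eq_right (by norm_num : (-1:ℝ) ≤ 0)]
        linarith [(hx2' j).1]
      · simp
      · rw [max_eq_left (by norm_num : (0:ℝ) ≤ 1)]
        linarith [(hx2' j).2]
    · rw [hcw xbar]
      have hN : ∀ j, ∃ N : ℕ, |x j - xbar j| = (N : ℝ) / q := by
        intro j
        obtain ⟨m, hm⟩ := hx1' j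
        obtain ⟨m', hm'⟩ := hxbar1 j
        refine ⟨((m : ℤ) - m').natAbs, ?_⟩
        rw [hm, hm', div_sub_div_same, abs_div, abs_of_nonneg hq0.le, Nat.cast_natAbs]
        push_cast
        ring_nf
      choose N hN2 using hN
      have hsum : ∑ j, |x j - xbar j| = ((∑ j, N j : ℕ) : ℝ) / q := by
        push_cast
        rw [Finset.sum_div]
        exact Finset.sum_congr rfl fun j _ => hN2 j
      have hNε : ((∑ j, N j : ℕ) : ℝ) ≤ (q : ℝ) * ε := by
        have := hsum ▸ hxd
        rw [div_le_iff₀ hq0] at this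
        linarith
      have hNfloor : ((∑ j, N j : ℕ) : ℤ) ≤ ⌊(q : ℝ) * ε⌋ := Int.le_floor.mpr (by exact_mod_cast hNε)
      have hsumfloor : ∑ j, |x j - xbar j| ≤ ((⌊(q : ℝ) * ε⌋ : ℤ) : ℝ) / q := by
        rw [hsum]
        exact (div_le_div_iff_of_pos_right hq0).mpr (by exact_mod_cast hNfloor)
      have hterm : ∀ j ∈ Finset.univ, (c * W j) * x j - (c * W j) * xbar j ≤ |x j - xbar j| := by
        intro j _
        rcases ha j with h | h | h <;> rw [h]
        · linarith [neg_abs_le (x j - xbar j)]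
        · simp [abs_nonneg]
        · linarith [le_abs_self (x j - xbar j)]
      have hdiff : ∑ j, (c * W j) * x j - ∑ j, (c * W j) * xbar j ≤ ∑ j, |x j - xbar j| := by
        rw [← Finset.sum_sub_distrib]
        exact Finset.sum_le_sum hterm
      have : (1 / (q : ℝ)) * ((⌊(q : ℝ) * ε⌋ : ℤ) : ℝ) = ((⌊(q : ℝ) * ε⌋ : ℤ) : ℝ) / q := by ring
      linarith [hsumfloor, hdiff]
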